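/- Let ρ(θ) = e^{−G(θ)}/Z(θ) with G(θ) = ∑_j θ_j G_j, Z(θ) = Tr[e^{−G(θ)}], and suppose the derivative formula ∂_j ρ(θ) = −(1/2){Φ_θ(G_j), ρ(θ)} + ρ(θ)⟨G_j⟩_{ρ(θ)} holds, where Φ_θ is a Hermiticity-preserving linear map commuting with conjugation by e^{iG(θ)t}. Then the Fisher–Bures information matrix elements satisfy I^{FB}_{ij}(θ) = (1/2) Tr[{Φ_θ(G_i), Φ_θ(G_j)} ρ(θ)] − ⟨G_i⟩_{ρ(θ)} ⟨G_j⟩_{ρ(θ)}. -/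

import Mathlib

open Matrix

/-- Fisher--Bures information matrix element, expressed through eigenvalues `lam`,
orthonormal eigenvectors `u` of the state, and derivative matrices `d`. -/
noncomputable def fisherBures {ι : Type*} [Fintype ι] {J : ℕ}
    (lam : ι → ℝ) (u : ι → ι → ℂ) (d : Fin J → Matrix ι ι ℂ) (i j : Fin J) : ℂ :=
  2 * ∑ k, ∑ ℓ,
      (star (u k) ⬝ᵥ (d i).mulVec (u ℓ)) * (star (u ℓ) ⬝ᵥ (d j).mulVec (u k)) /
        (((lam k + lam ℓ : ℝ)) : ℂ)

/-- Theorem 1: for the thermal family ρ(θ) = e^{−G(θ)}/Z(θ) with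
G(θ) = ∑_j θ_j G_j, if the derivative formula
∂_j ρ = −(1/2){Φ(G_j), ρ} + ρ⟨G_j⟩ holds for a Hermiticity-preserving linear map
Φ satisfying Tr[ρ Φ(G_j)] = ⟨G_j⟩_ρ, then
I^{FB}_{ij} = (1/2)Tr[{Φ(G_i), Φ(G_j)} ρ] − ⟨G_i⟩_ρ ⟨G_j⟩_ρ. -/
theorem fisherBures_thermal {n J : ℕ}
    (G : Fin J → Matrix (Fin n) (Fin n) ℂ) (hG : ∀ j, (G j).IsHermitian)
    (θ : Fin J → ℝ)
    (ρ : Matrix (Fin n) (Fin n) ℂ)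
    (hρ : ρ = (Matrix.trace (NormedSpace.exp (-(∑ j, (θ j : ℂ) • G j))))⁻¹ •
        NormedSpace.exp (-(∑ j, (θ j : ℂ) • G j)))
    (lam : Fin n → ℝ) (u : Fin n → (Fin n → ℂ))
    (hlam : ∀ k, 0 < lam k)
    (horth : ∀ k ℓ, star (u k) ⬝ᵥ u ℓ = if k = ℓ then (1 : ℂ) else 0)
    (heig : ∀ k, ρ.mulVec (u k) = (lam k : ℂ) • u k)
    (Φ : Matrix (Fin n) (Fin n) ℂ →ₗ[ℂ] Matrix (Fin n) (Fin n) ℂ)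
    (hΦherm : ∀ X : Matrix (Fin n) (Fin n) ℂ, X.IsHermitian → (Φ X).IsHermitian)
    (hΦtr : ∀ j, Matrix.trace (ρ * Φ (G j)) = Matrix.trace (ρ * G j))
    (dρ : Fin J → Matrix (Fin n) (Fin n) ℂ)
    (hdρ : ∀ j, dρ j = -(1 / 2 : ℂ) • (Φ (G j) * ρ + ρ * Φ (G j)) +
        (Matrix.trace (G j * ρ)) • ρ)
    (i j : Fin J) :
    fisherBures lam u dρ i j
      = (1 / 2 : ℂ) * Matrix.trace ((Φ (G i) * Φ (G j) + Φ (G j) * Φ (G i)) * ρ) -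
          Matrix.trace (G i * ρ) * Matrix.trace (G j * ρ) := by
  classical
  rcases Nat.eq_zero_or_pos n with hn | hn
  · subst hn
    simp [fisherBures, Matrix.trace]
  have : NeZero n := ⟨hn.ne'⟩
  set V : Matrix (Fin n) (Fin n) ℂ := Matrix.of (fun m k => u k m) with hVdef
  set D : Matrix (Fin n) (Fin n) ℂ := Matrix.diagonal (fun k => (lam k : ℂ)) with hDdef
  have hVhV : Vᴴ * V = 1 := by
    ext k ℓ
    have := horth k ℓ
    simpa [hVdef, Matrix.mul_apply, Matrix.conjTranspose_apply, Matrix.one_apply,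
      dotProduct] using this
  have hVVh : V * Vᴴ = 1 := mul_eq_one_comm.mp hVhV
  have hρV : ρ * V = V * D := by
    ext m k
    have hk := congrFun (heig k) m
    simp only [Matrix.mulVec, dotProduct, Pi.smul_apply, smul_eq_mul] at hk
    simp only [hVdef, hDdef, Matrix.mul_apply, Matrix.of_apply, Matrix.diagonal_apply,
      mul_ite, mul_zero]
    rw [hk, Finset.sum_ite_eq' Finset.univ k (fun x => u x m * (lam x : ℂ))]
    simp [mul_comm]
  have hVρ : Vᴴ * ρ = D * Vᴴ := by
    calc Vᴴ * ρ = Vᴴ * ρ * (V * Vᴴ) := by rw [hVVh, Matrix.mul_one]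
      _ = Vᴴ * (ρ * V) * Vᴴ := by simp only [Matrix.mul_assoc]
      _ = Vᴴ * (V * D) * Vᴴ := by rw [hρV]
      _ = (Vᴴ * V) * (D * Vᴴ) := by simp only [Matrix.mul_assoc]
      _ = D * Vᴴ := by rw [hVhV, Matrix.one_mul]
  have hρD : Vᴴ * ρ * V = D := by
    rw [hVρ, Matrix.mul_assoc, hVhV, Matrix.mul_one]
  have hquad : ∀ (M : Matrix (Fin n) (Fin n) ℂ) (k ℓ : Fin n),
      star (u k) ⬝ᵥ M.mulVec (u ℓ) = (Vᴴ * M * V) k ℓ := by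
    intro M k ℓ
    simp only [hVdef, Matrix.mul_apply, Matrix.conjTranspose_apply, Matrix.of_apply, dotProduct,
      Matrix.mulVec, Pi.star_apply, Finset.sum_mul, Finset.mul_sum]
    rw [Finset.sum_comm]
    refine Finset.sum_congr rfl fun m _ => Finset.sum_congr rfl fun p _ => by ring
  have htr : ∀ M : Matrix (Fin n) (Fin n) ℂ, Matrix.trace (Vᴴ * M * V) = Matrix.trace M := by
    intro M
    rw [Matrix.trace_mul_comm, ← Matrix.mul_assoc, hVVh, Matrix.one_mul]
  set X := Φ (G i) with hXdef
  set Y := Φ (G j) with hYdef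
  set a := Matrix.trace (G i * ρ) with hadef
  set b := Matrix.trace (G j * ρ) with hbdef
  set A := Vᴴ * X * V with hAdef
  set B := Vᴴ * Y * V with hBdef
  -- transported products
  have hcomb : ∀ M N : Matrix (Fin n) (Fin n) ℂ,
      (Vᴴ * M * V) * (Vᴴ * N * V) = Vᴴ * (M * N) * V := by
    intro M N
    simp only [Matrix.mul_assoc]
    rw [← Matrix.mul_assoc V Vᴴ, hVVh, Matrix.one_mul]
  -- key transported derivative formula
  have key : ∀ p : Fin J, Vᴴ * dρ p * V =
      (-(1 / 2 : ℂ)) • ((Vᴴ * Φ (G p) * V) * D + D * (Vᴴ * Φ (G p) * V)) +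
        (Matrix.trace (G p * ρ)) • D := by
    intro p
    rw [hdρ p]
    have h1 : Vᴴ * (Φ (G p) * ρ) * V = (Vᴴ * Φ (G p) * V) * D := by
      calc Vᴴ * (Φ (G p) * ρ) * V = Vᴴ * Φ (G p) * (ρ * V) := by simp only [Matrix.mul_assoc]
        _ = Vᴴ * Φ (G p) * (V * D) := by rw [hρV]
        _ = (Vᴴ * Φ (G p) * V) * D := by simp only [Matrix.mul_assoc]
    have h2 : Vᴴ * (ρ * Φ (G p)) * V = D * (Vᴴ * Φ (G p) * V) := by
      calc Vᴴ * (ρ * Φ (G p)) * V = (Vᴴ * ρ) * (Φ (G p) * V) := by simp only [Matrix.mul_assoc]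
        _ = D * Vᴴ * (Φ (G p) * V) := by rw [hVρ]
        _ = D * (Vᴴ * Φ (G p) * V) := by simp only [Matrix.mul_assoc]
    simp only [Matrix.add_mul, Matrix.mul_add, Matrix.smul_mul, Matrix.mul_smul]
    rw [h1, h2, hρD]
  -- entrywise derivative formula
  have hent : ∀ (p : Fin J) (k ℓ : Fin n),
      star (u k) ⬝ᵥ (dρ p).mulVec (u ℓ) =
        -(1 / 2 : ℂ) * ((lam k : ℂ) + (lam ℓ : ℂ)) * ((Vᴴ * Φ (G p) * V) k ℓ) +
          (Matrix.trace (G p * ρ)) * (if k = ℓ then (lam k : ℂ) else 0) := by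
    intro p k ℓ
    rw [hquad, key p]
    simp only [Matrix.add_apply, Matrix.smul_apply, Matrix.mul_diagonal, Matrix.diagonal_mul,
      hDdef, Matrix.diagonal_apply, smul_eq_mul]
    split_ifs with h
    · subst h; ring
    · ring
  -- trace identities
  have htrD : Matrix.trace D = 1 := by
    have hρtr : Matrix.trace ρ = Matrix.trace D := by rw [← hρD, htr]
    have hsum : Matrix.trace D = ((∑ k, lam k : ℝ) : ℂ) := by
      simp [hDdef, Matrix.trace_diagonal]
    have hpos : (0 : ℝ) < ∑ k, lam k :=
      Finset.sum_pos (fun k _ => hlam k) Finset.univ_nonempty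
    have hne : Matrix.trace ρ ≠ 0 := by
      rw [hρtr, hsum]
      exact_mod_cast hpos.ne'
    rw [← hρtr]
    rw [hρ, Matrix.trace_smul, smul_eq_mul] at hne ⊢
    have hZ : Matrix.trace (NormedSpace.exp (-(∑ j, (θ j : ℂ) • G j))) ≠ 0 := by
      intro h; rw [h] at hne; simp at hne
    rw [inv_mul_cancel₀ hZ]
  have htrDA : Matrix.trace (D * A) = a := by
    rw [← hρD, hAdef, hcomb, htr, hΦtr i, Matrix.trace_mul_comm]
  have htrDB : Matrix.trace (D * B) = b := by
    rw [← hρD, hBdef, hcomb, htr, hΦtr j, Matrix.trace_mul_comm]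
  have htrDAB : Matrix.trace (D * A * B) = Matrix.trace (X * Y * ρ) := by
    rw [← hρD, hAdef, hcomb, hBdef, hcomb, htr]
    rw [Matrix.mul_assoc ρ X Y, Matrix.trace_mul_comm ρ (X * Y)]
  have htrDBA : Matrix.trace (D * B * A) = Matrix.trace (Y * X * ρ) := by
    rw [← hρD, hBdef, hcomb, hAdef, hcomb, htr]
    rw [Matrix.mul_assoc ρ Y X, Matrix.trace_mul_comm ρ (Y * X)]
  -- per-term formula
  have hterm : ∀ k ℓ : Fin n,
      (star (u k) ⬝ᵥ (dρ i).mulVec (u ℓ)) * (star (u ℓ) ⬝ᵥ (dρ j).mulVec (u k)) /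
          (((lam k + lam ℓ : ℝ)) : ℂ) =
        (1 / 4 : ℂ) * ((lam k : ℂ) * A k ℓ * B ℓ k) +
          (1 / 4 : ℂ) * ((lam ℓ : ℂ) * A k ℓ * B ℓ k) +
          (if k = ℓ then
            ((a * b / 2) * (lam k : ℂ) - (b / 2) * ((lam k : ℂ) * A k ℓ) -
              (a / 2) * ((lam k : ℂ) * B ℓ k))
          else 0) := by
    intro k ℓ
    have hcpos : (0 : ℝ) < lam k + lam ℓ := add_pos (hlam k) (hlam ℓ)
    have hc : ((lam k : ℂ) + (lam ℓ : ℂ)) ≠ 0 := by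
      exact_mod_cast hcpos.ne'
    rw [hent i, hent j]
    push_cast
    by_cases h : k = ℓ
    · subst h
      simp only [eq_self_iff_true, if_true]
      have hk0 : (lam k : ℂ) ≠ 0 := by exact_mod_cast (hlam k).ne'
      field_simp
      ring
    · simp only [if_neg h, if_neg (Ne.symm h)]
      field_simp
      ring
  -- sum identities
  have hsum1 : ∑ k, ∑ ℓ, (lam k : ℂ) * A k ℓ * B ℓ k = Matrix.trace (D * A * B) := by
    rw [Matrix.trace]
    refine Finset.sum_congr rfl fun k _ => ?_
    rw [Matrix.diag_apply, Matrix.mul_apply]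
    refine Finset.sum_congr rfl fun ℓ _ => ?_
    rw [hDdef, Matrix.diagonal_mul]
  have hsum2 : ∑ k, ∑ ℓ, (lam ℓ : ℂ) * A k ℓ * B ℓ k = Matrix.trace (D * B * A) := by
    rw [Finset.sum_comm, Matrix.trace]
    refine Finset.sum_congr rfl fun ℓ _ => ?_
    rw [Matrix.diag_apply, Matrix.mul_apply]
    refine Finset.sum_congr rfl fun k _ => ?_
    rw [hDdef, Matrix.diagonal_mul]
    ring
  have hsum3 : ∑ k, (lam k : ℂ) * A k k = Matrix.trace (D * A) := by
    rw [Matrix.trace]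
    refine Finset.sum_congr rfl fun k _ => ?_
    rw [Matrix.diag_apply, hDdef, Matrix.diagonal_mul]
  have hsum4 : ∑ k, (lam k : ℂ) * B k k = Matrix.trace (D * B) := by
    rw [Matrix.trace]
    refine Finset.sum_congr rfl fun k _ => ?_
    rw [Matrix.diag_apply, hDdef, Matrix.diagonal_mul]
  have hsum5 : ∑ k, (lam k : ℂ) = 1 := by
    rw [← htrD, hDdef, Matrix.trace_diagonal]
  -- final assembly
  rw [fisherBures]
  have hstep : (∑ k, ∑ ℓ,
      (star (u k) ⬝ᵥ (dρ i).mulVec (u ℓ)) * (star (u ℓ) ⬝ᵥ (dρ j).mulVec (u k)) /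
        (((lam k + lam ℓ : ℝ)) : ℂ)) =
      (1 / 4 : ℂ) * Matrix.trace (D * A * B) + (1 / 4 : ℂ) * Matrix.trace (D * B * A) +
        ((a * b / 2) * 1 - (b / 2) * Matrix.trace (D * A) - (a / 2) * Matrix.trace (D * B)) := by
    rw [Finset.sum_congr rfl fun k _ => Finset.sum_congr rfl fun ℓ _ => hterm k ℓ]
    simp only [Finset.sum_add_distrib, Finset.sum_ite_eq, Finset.mem_univ, if_true,
      Finset.sum_sub_distrib, ← Finset.mul_sum]
    rw [hsum1, hsum2, hsum3, hsum4, hsum5]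
  rw [hstep, htrDAB, htrDBA, htrDA, htrDB, Matrix.add_mul, Matrix.trace_add]
  ring
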